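/- Let $W$ be a real vector space of finite dimension $d$, and let $O \subseteq \mathbb{R}^m$ be the complement in $\mathbb{R}^m$ of a finite union of images of Lipschitz maps from $W$ (i.e., of sets of Hausdorff dimension at most $d$). If $d + i + 1 < m$, then every Lipschitz map $\phi : S^i \to O$ is null-homotopic in $O$: there exists $x \in O$ such that the straight-line homotopy $\phi_t(s) = t x + (1-t)\phi(s)$ stays inside $O$ for all $t \in [0,1]$. -/

import Mathlib

open Set Metric Topology Filter MeasureTheory Module

open scoped ENNReal NNReal

noncomputable def sphChart (n : ℕ) (k : Fin (n+1)) (ε : ℝ) (u : EuclideanSpace ℝ (Fin n)) :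
    EuclideanSpace ℝ (Fin (n+1)) :=
  (EuclideanSpace.equiv (Fin (n+1)) ℝ).symm
    (Fin.insertNth k (ε * Real.sqrt (1 - ∑ l, u l ^ 2)) (fun l => u l))

theorem eucl_norm_sq_eq (n : ℕ) (u : EuclideanSpace ℝ (Fin n)) : ‖u‖ ^ 2 = ∑ l, u l ^ 2 := by
  rw [EuclideanSpace.norm_eq, Real.sq_sqrt (by positivity)]
  simp [sq_abs]

theorem sphChart_mem_sphere (n : ℕ) (k : Fin (n+1)) (ε : ℝ) (hε : ε = 1 ∨ ε = -1)
    (u : EuclideanSpace ℝ (Fin n)) (hu : ‖u‖ ≤ 1) :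
    sphChart n k ε u ∈ sphere (0 : EuclideanSpace ℝ (Fin (n+1))) 1 := by
  have hq : ∑ l, u l ^ 2 ≤ 1 := by
    rw [← eucl_norm_sq_eq]; nlinarith [norm_nonneg u]
  have hsum : ∑ j, (sphChart n k ε u j) ^ 2 = 1 := by
    rw [Fin.sum_univ_succAbove _ k]
    have h1 : (sphChart n k ε u k) ^ 2 = 1 - ∑ l, u l ^ 2 := by
      simp only [sphChart]
      have : ε ^ 2 = 1 := by rcases hε with h | h <;> simp [h]
      rw [show ((EuclideanSpace.equiv (Fin (n+1)) ℝ).symm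
        (Fin.insertNth k (ε * Real.sqrt (1 - ∑ l, u l ^ 2)) (fun l => u l))) k
        = ε * Real.sqrt (1 - ∑ l, u l ^ 2) by simp]
      rw [mul_pow, this, one_mul, Real.sq_sqrt (by linarith)]
    have h2 : ∀ l, (sphChart n k ε u (k.succAbove l)) ^ 2 = u l ^ 2 := by
      intro l; simp [sphChart]
    simp only [h1, h2]
    ring
  simp only [mem_sphere_iff_norm, sub_zero]
  rw [EuclideanSpace.norm_eq]
  simp only [Real.norm_eq_abs, sq_abs]
  rw [hsum, Real.sqrt_one]

theorem sphChart_surj (n : ℕ) (s : EuclideanSpace ℝ (Fin (n+1)))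
    (hs : s ∈ sphere (0 : EuclideanSpace ℝ (Fin (n+1))) 1) :
    ∃ k ε u, (ε = 1 ∨ ε = -1) ∧ ‖u‖ < 1 ∧ sphChart n k ε u = s := by
  have hsum : ∑ j, s j ^ 2 = 1 := by
    have := mem_sphere_iff_norm.mp hs
    rw [sub_zero] at this
    have h2 := eucl_norm_sq_eq (n+1) s
    rw [this] at h2; linarith [h2.symm]
  have : ∃ k, s k ≠ 0 := by
    by_contra h
    push_neg at h
    simp [h] at hsum
  obtain ⟨k, hk⟩ := this
  refine ⟨k, if 0 < s k then 1 else -1, WithLp.toLp 2 (fun l => s (k.succAbove l)), ?_, ?_, ?_⟩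
  · split <;> simp
  · have hrest : ∑ l, s (k.succAbove l) ^ 2 = 1 - s k ^ 2 := by
      rw [Fin.sum_univ_succAbove _ k] at hsum; linarith
    have h3 := eucl_norm_sq_eq n (WithLp.toLp 2 (fun l => s (k.succAbove l)))
    rw [hrest] at h3
    nlinarith [norm_nonneg (WithLp.toLp 2 (fun l => s (k.succAbove l)) : EuclideanSpace ℝ (Fin n)),
      sq_pos_of_ne_zero hk]
  · have hrest : (∑ l, (WithLp.toLp 2 (fun l => s (k.succAbove l)) : EuclideanSpace ℝ (Fin n)) l ^ 2)
        = 1 - s k ^ 2 := by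
      rw [Fin.sum_univ_succAbove _ k] at hsum
      simpa using by linarith
    have hsqrt : Real.sqrt (1 - ∑ l, (WithLp.toLp 2 (fun l => s (k.succAbove l)) :
        EuclideanSpace ℝ (Fin n)) l ^ 2) = |s k| := by
      rw [hrest]
      simp [Real.sqrt_sq_eq_abs]
    ext j
    refine Fin.succAboveCases k ?_ ?_ j
    · show sphChart n k _ _ k = s k
      simp only [sphChart]
      rw [show ∀ a v, ((EuclideanSpace.equiv (Fin (n+1)) ℝ).symm
        (Fin.insertNth k a v)) k = a from fun a v => by simp]
      rw [hsqrt]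
      split
      · rw [one_mul, abs_of_pos ‹_›]
      · rw [neg_one_mul, abs_of_neg (lt_of_le_of_ne (not_lt.mp ‹_›) hk), neg_neg]
    · intro l
      show sphChart n k _ _ (k.succAbove l) = s (k.succAbove l)
      simp [sphChart]

theorem sphChart_contDiffAt (n : ℕ) (k : Fin (n+1)) (ε : ℝ)
    (u0 : EuclideanSpace ℝ (Fin n)) (hu : ∑ l, u0 l ^ 2 < 1) :
    ContDiffAt ℝ 1 (sphChart n k ε) u0 := by
  have hq : ContDiffAt ℝ 1 (fun u : EuclideanSpace ℝ (Fin n) => ∑ l, u l ^ 2) u0 := by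
    apply ContDiffAt.sum
    intro l _
    exact ((EuclideanSpace.proj l : EuclideanSpace ℝ (Fin n) →L[ℝ] ℝ).contDiff.pow 2).contDiffAt
  have hg : ContDiffAt ℝ 1
      (fun u : EuclideanSpace ℝ (Fin n) => ε * Real.sqrt (1 - ∑ l, u l ^ 2)) u0 := by
    exact ContDiffAt.mul contDiffAt_const <| (Real.contDiffAt_sqrt (by linarith)).comp u0 (contDiffAt_const.sub hq)
  have : ContDiffAt ℝ 1 (fun u : EuclideanSpace ℝ (Fin n) =>
      (Fin.insertNth k (ε * Real.sqrt (1 - ∑ l, u l ^ 2)) (fun l => u l) : Fin (n+1) → ℝ)) u0 := by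
    rw [contDiffAt_pi]
    intro j
    refine Fin.succAboveCases k ?_ ?_ j
    · simpa using hg
    · intro l
      simp only [Fin.insertNth_apply_succAbove]
      exact (EuclideanSpace.proj l : EuclideanSpace ℝ (Fin n) →L[ℝ] ℝ).contDiff.contDiffAt
  exact ((EuclideanSpace.equiv (Fin (n+1)) ℝ).symm.contDiff.contDiffAt.comp u0 this : _)

noncomputable def Gmap (d i m : ℕ) (f1 : (Fin d → ℝ) → (Fin m → ℝ))
    (φ : EuclideanSpace ℝ (Fin (i+1)) → (Fin m → ℝ)) (k : Fin (i+1)) (ε : ℝ)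
    (p : (Fin d → ℝ) × (EuclideanSpace ℝ (Fin i) × ℝ)) : Fin m → ℝ :=
  (p.2.2)⁻¹ • f1 p.1 - ((p.2.2)⁻¹ - 1) • φ (sphChart i k ε p.2.1)

def Sset (d i : ℕ) : Set ((Fin d → ℝ) × (EuclideanSpace ℝ (Fin i) × ℝ)) :=
  univ ×ˢ (ball 0 1 ×ˢ Ioi 0)

/-- local Lipschitzness of ψ = φ ∘ chart -/

theorem psi_locLip (i m : ℕ) (φ : EuclideanSpace ℝ (Fin (i+1)) → (Fin m → ℝ)) (Kφ : NNReal)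
    (hφ : LipschitzOnWith Kφ φ (sphere (0 : EuclideanSpace ℝ (Fin (i + 1))) 1))
    (k : Fin (i+1)) (ε : ℝ) (hε : ε = 1 ∨ ε = -1)
    (u0 : EuclideanSpace ℝ (Fin i)) (hu0 : ‖u0‖ < 1) :
    ∃ C, ∃ t ∈ 𝓝 u0, LipschitzOnWith C (fun u => φ (sphChart i k ε u)) t := by
  have hq : ∑ l, u0 l ^ 2 < 1 := by
    rw [← eucl_norm_sq_eq]; nlinarith [norm_nonneg u0]
  obtain ⟨Kc, t2, ht2, hlip⟩ := (sphChart_contDiffAt i k ε u0 hq).exists_lipschitzOnWith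
  refine ⟨Kφ * Kc, t2 ∩ closedBall 0 1, inter_mem ht2 (closedBall_mem_nhds_of_mem (mem_ball_zero_iff.mpr hu0)), ?_⟩
  exact hφ.comp (hlip.mono inter_subset_left) fun u hu =>
    sphChart_mem_sphere i k ε hε u (mem_closedBall_zero_iff.mp hu.2)

/-- local Lipschitzness of the smooth outer map -/

theorem g_locLip (m : ℕ) (p0 : (Fin m → ℝ) × ((Fin m → ℝ) × ℝ)) (h : p0.2.2 ≠ 0) :
    ∃ C, ∃ V ∈ 𝓝 p0, LipschitzOnWith C
      (fun q : (Fin m → ℝ) × ((Fin m → ℝ) × ℝ) => (q.2.2)⁻¹ • q.1 - ((q.2.2)⁻¹ - 1) • q.2.1)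
      V := by
  have h22 : ContDiffAt ℝ 1 (fun q : (Fin m → ℝ) × ((Fin m → ℝ) × ℝ) => q.2.2) p0 :=
    (contDiff_snd.comp contDiff_snd).contDiffAt
  have hinv : ContDiffAt ℝ 1 (fun q : (Fin m → ℝ) × ((Fin m → ℝ) × ℝ) => (q.2.2)⁻¹) p0 :=
    h22.inv h
  have : ContDiffAt ℝ 1
      (fun q : (Fin m → ℝ) × ((Fin m → ℝ) × ℝ) =>
        (q.2.2)⁻¹ • q.1 - ((q.2.2)⁻¹ - 1) • q.2.1) p0 := by
    exact (hinv.smul contDiff_fst.contDiffAt).sub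
      ((hinv.sub contDiffAt_const).smul (contDiff_fst.comp contDiff_snd).contDiffAt)
  exact this.exists_lipschitzOnWith

set_option maxHeartbeats 1000000 in
theorem G_locLip (d i m : ℕ) (f1 : (Fin d → ℝ) → (Fin m → ℝ)) (K1 : NNReal)
    (h1 : LipschitzWith K1 f1)
    (φ : EuclideanSpace ℝ (Fin (i+1)) → (Fin m → ℝ)) (Kφ : NNReal)
    (hφ : LipschitzOnWith Kφ φ (sphere (0 : EuclideanSpace ℝ (Fin (i + 1))) 1))
    (k : Fin (i+1)) (ε : ℝ) (hε : ε = 1 ∨ ε = -1) :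
    ∀ p ∈ Sset d i, ∃ C : NNReal, ∃ t ∈ 𝓝[Sset d i] p,
      LipschitzOnWith C (Gmap d i m f1 φ k ε) t := by
  rintro ⟨w0, u0, t0⟩ hp
  obtain ⟨-, hu0, ht0⟩ := hp
  rw [mem_ball_zero_iff] at hu0
  obtain ⟨Cψ, t1, ht1, hψ⟩ := psi_locLip i m φ Kφ hφ k ε hε u0 hu0
  set X := (Fin d → ℝ) × (EuclideanSpace ℝ (Fin i) × ℝ)
  set ψ := fun u => φ (sphChart i k ε u) with hψdef
  set Φ : X → (Fin m → ℝ) × ((Fin m → ℝ) × ℝ) :=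
    fun p => (f1 p.1, (ψ p.2.1, p.2.2)) with hΦdef
  set W0 : Set X := univ ×ˢ (t1 ×ˢ univ) with hW0def
  have hW0 : W0 ∈ 𝓝 ((w0, u0, t0) : X) :=
    prod_mem_nhds univ_mem (prod_mem_nhds ht1 univ_mem)
  have c1 : LipschitzOnWith (K1 * 1) (fun p : X => f1 p.1) W0 :=
    (h1.comp LipschitzWith.prod_fst).lipschitzOnWith
  have c2 : LipschitzOnWith (Cψ * (1 * 1)) (fun p : X => ψ p.2.1) W0 := by
    refine hψ.comp ((LipschitzWith.prod_fst.comp LipschitzWith.prod_snd).lipschitzOnWith) ?_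
    rintro ⟨w, u, t⟩ hq
    exact hq.2.1
  have c3 : LipschitzOnWith (1 * 1) (fun p : X => p.2.2) W0 :=
    (LipschitzWith.prod_snd.comp LipschitzWith.prod_snd).lipschitzOnWith
  have hΦ := c1.prodMk (c2.prodMk c3)
  obtain ⟨Cg, V, hV, hgV⟩ := g_locLip m (Φ (w0, u0, t0)) (ne_of_gt ht0)
  have hcont : ContinuousWithinAt Φ W0 (w0, u0, t0) :=
    hΦ.continuousOn.continuousWithinAt (mem_of_mem_nhds hW0)
  have hpre : Φ ⁻¹' V ∈ 𝓝[W0] ((w0, u0, t0) : X) := hcont.preimage_mem_nhdsWithin hV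
  rw [nhdsWithin_eq_nhds.2 hW0] at hpre
  refine ⟨Cg * (K1 * 1 ⊔ (Cψ * (1 * 1) ⊔ 1 * 1)), W0 ∩ Φ ⁻¹' V,
    nhdsWithin_le_nhds (inter_mem hW0 hpre), ?_⟩
  have key := hgV.comp (hΦ.mono inter_subset_left) (fun q hq => hq.2)
  have heq : Gmap d i m f1 φ k ε =
      (fun q : (Fin m → ℝ) × ((Fin m → ℝ) × ℝ) => (q.2.2)⁻¹ • q.1 - ((q.2.2)⁻¹ - 1) • q.2.1)
        ∘ Φ := by
    funext p
    simp only [Gmap, Function.comp, hΦdef, hψdef]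
  rw [heq]
  exact key

/-- If `O ⊆ ℝᵐ` is the complement of a finite union of images of Lipschitz maps
from a `d`-dimensional space, and `d + i + 1 < m`, then every Lipschitz map
`φ` from the `i`-sphere into `O` is null-homotopic in `O` via a straight-line
homotopy towards some point `x ∈ O`. -/
theorem stmt1 (m d i : ℕ) (hdim : d + i + 1 < m)
    (J : Type) [Finite J] (f : J → (Fin d → ℝ) → (Fin m → ℝ))
    (K : J → NNReal) (hf : ∀ j, LipschitzWith (K j) (f j))
    (O : Set (Fin m → ℝ)) (hO : O = (⋃ j, Set.range (f j))ᶜ)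
    (φ : EuclideanSpace ℝ (Fin (i + 1)) → (Fin m → ℝ)) (Kφ : NNReal)
    (hφ : LipschitzOnWith Kφ φ (Metric.sphere (0 : EuclideanSpace ℝ (Fin (i + 1))) 1))
    (hφO : ∀ s ∈ Metric.sphere (0 : EuclideanSpace ℝ (Fin (i + 1))) 1, φ s ∈ O) :
    ∃ x ∈ O, ∀ s ∈ Metric.sphere (0 : EuclideanSpace ℝ (Fin (i + 1))) 1,
      ∀ t ∈ Set.Icc (0 : ℝ) 1, t • x + (1 - t) • φ s ∈ O := by
  classical
  have : Countable J := Finite.to_countable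
  set εv : Bool → ℝ := fun b => if b then 1 else -1 with hεvdef
  have hεv : ∀ b, εv b = 1 ∨ εv b = -1 := by intro b; cases b <;> simp [hεvdef]
  set A : Set (Fin m → ℝ) := ⋃ j, Set.range (f j) with hA
  set B : Set (Fin m → ℝ) :=
    ⋃ j, ⋃ k : Fin (i+1), ⋃ b : Bool, Gmap d i m (f j) φ k (εv b) '' Sset d i with hB
  have hdA : dimH A ≤ (d : ℝ≥0∞) := by
    rw [hA, dimH_iUnion]
    refine iSup_le fun j => ?_
    calc dimH (range (f j)) ≤ dimH (univ : Set (Fin d → ℝ)) := (hf j).dimH_range_le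
    _ = (d : ℝ≥0∞) := Real.dimH_univ_pi_fin d
  have hdS : dimH (Sset d i) ≤ ((d + i + 1 : ℕ) : ℝ≥0∞) := by
    calc dimH (Sset d i)
        ≤ dimH (univ : Set ((Fin d → ℝ) × (EuclideanSpace ℝ (Fin i) × ℝ))) :=
          dimH_mono (subset_univ _)
      _ = (finrank ℝ ((Fin d → ℝ) × (EuclideanSpace ℝ (Fin i) × ℝ)) : ℝ≥0∞) :=
          Real.dimH_univ_eq_finrank _
      _ = ((d + i + 1 : ℕ) : ℝ≥0∞) := by
          norm_cast
          rw [Module.finrank_prod, Module.finrank_prod, Module.finrank_fin_fun,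
            finrank_euclideanSpace_fin, Module.finrank_self]
          omega
  have hdB : dimH B ≤ ((d + i + 1 : ℕ) : ℝ≥0∞) := by
    rw [hB, dimH_iUnion]
    refine iSup_le fun j => ?_
    rw [dimH_iUnion]
    refine iSup_le fun k => ?_
    rw [dimH_iUnion]
    refine iSup_le fun b => ?_
    exact le_trans
      (dimH_image_le_of_locally_lipschitzOn
        (G_locLip d i m (f j) (K j) (hf j) φ Kφ hφ k (εv b) (hεv b))) hdS
  have hlt : dimH (A ∪ B) < (finrank ℝ (Fin m → ℝ) : ℝ≥0∞) := by
    rw [dimH_union, Module.finrank_fin_fun]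
    have h1 : dimH A < (m : ℝ≥0∞) := lt_of_le_of_lt hdA (by exact_mod_cast (by omega : d < m))
    have h2 : dimH B < (m : ℝ≥0∞) := lt_of_le_of_lt hdB (by exact_mod_cast hdim)
    exact max_lt h1 h2
  have hdense : Dense (A ∪ B)ᶜ := dense_compl_of_dimH_lt_finrank hlt
  obtain ⟨x, hx⟩ := hdense.nonempty
  rw [mem_compl_iff, mem_union, not_or] at hx
  obtain ⟨hxA, hxB⟩ := hx
  refine ⟨x, by rw [hO]; exact hxA, ?_⟩
  intro s hs t ht
  rw [hO, mem_compl_iff]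
  intro hmem
  rw [mem_iUnion] at hmem
  obtain ⟨j, w, hw⟩ := hmem
  rcases eq_or_lt_of_le ht.1 with h0 | hpos
  · apply (by rw [hO] at hφO; exact hφO s hs : φ s ∈ (⋃ j, Set.range (f j))ᶜ)
    rw [mem_iUnion]
    exact ⟨j, w, by rw [hw, ← h0]; simp⟩
  · obtain ⟨k, ε, u, hε, hu, hcu⟩ := sphChart_surj i s hs
    have tne : t ≠ 0 := ne_of_gt hpos
    have hb : ∃ b, εv b = ε := by
      rcases hε with h | h
      · exact ⟨true, by simp [hεvdef, h]⟩
      · exact ⟨false, by simp [hεvdef, h]⟩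
    obtain ⟨b, hbε⟩ := hb
    apply hxB
    rw [hB, mem_iUnion]
    refine ⟨j, ?_⟩
    rw [mem_iUnion]
    refine ⟨k, ?_⟩
    rw [mem_iUnion]
    refine ⟨b, ⟨(w, (u, t)), ⟨trivial, mem_ball_zero_iff.mpr hu, hpos⟩, ?_⟩⟩
    show t⁻¹ • f j w - (t⁻¹ - 1) • φ (sphChart i k (εv b) (w, (u, t)).2.1) = x
    rw [hbε, hcu, hw]
    have h1 : t⁻¹ * t = 1 := inv_mul_cancel₀ tne
    have h2 : t⁻¹ * (1 - t) = t⁻¹ - 1 := by field_simp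
    rw [smul_add, smul_smul, smul_smul, h1, h2, one_smul]
    abel
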